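/- Let R be a Rota-Baxter operator of weight λ ≠ 0 on H_d. Then R(e0) ∈ {0, -λ e0}. That is, applying the Rota-Baxter identity to x = y = e0 and using the structure of H_d forces the e0-component a of R(e0) to satisfy a² + λa = 0 together with the vanishing of the pure part of R(e0). -/

import Mathlib

noncomputable section

/-- The dual quaternion algebra `H_d`, realized as the trivial square-zero
extension of `ℝ` by `ℝ³`; its multiplication is
`(x0,v)·(y0,w) = (x0 y0, x0 • w + y0 • v)`, matching the dual quaternion product. -/
abbrev Hd : Type := TrivSqZeroExt ℝ (Fin 3 → ℝ)

/-- Basis element `e0` (the identity). -/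
def e0 : Hd := 1
/-- Basis element `e1`. -/
def e1 : Hd := TrivSqZeroExt.inr (Pi.single 0 1)
/-- Basis element `e2`. -/
def e2 : Hd := TrivSqZeroExt.inr (Pi.single 1 1)
/-- Basis element `e3`. -/
def e3 : Hd := TrivSqZeroExt.inr (Pi.single 2 1)

/-- The element `x0 e0 + x1 e1 + x2 e2 + x3 e3` of `H_d`. -/
def mk (x0 x1 x2 x3 : ℝ) : Hd := x0 • e0 + x1 • e1 + x2 • e2 + x3 • e3

/-- `R` is a Rota-Baxter operator of weight `lam` on `H_d`. -/
def RotaBaxter (lam : ℝ) (R : Hd →ₗ[ℝ] Hd) : Prop :=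
  ∀ x y : Hd, R x * R y = R (R x * y) + R (x * R y) + lam • R (x * y)

/-- For a Rota-Baxter operator `R` of weight `λ ≠ 0` on `H_d`, one has
`R(e0) ∈ {0, -λ e0}`: the `e0`-component `a` of `R(e0)` satisfies
`a² + λ a = 0` and the pure part of `R(e0)` vanishes. -/
theorem stmt12 (lam : ℝ) (hlam : lam ≠ 0) (R : Hd →ₗ[ℝ] Hd)
    (hR : RotaBaxter lam R) :
    (R e0 = 0 ∨ R e0 = -lam • e0) ∧
    (TrivSqZeroExt.fst (R e0)) ^ 2 + lam * TrivSqZeroExt.fst (R e0) = 0 ∧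
    TrivSqZeroExt.snd (R e0) = 0 := by
  have hR : ∀ x y : Hd, R x * R y = R (R x * y) + R (x * R y) + lam • R (x * y) := hR
  have he0 : e0 = (1 : Hd) := rfl
  set u : Hd := R e0 with hu
  set a : ℝ := TrivSqZeroExt.fst u with ha
  set v : Fin 3 → ℝ := TrivSqZeroExt.snd u with hv
  -- Eq1 : u*u = R u + R u + lam • u
  have h1 : u * u = R u + R u + lam • u := by
    have := hR e0 e0
    simp only [he0, one_mul, mul_one] at this
    exact this
  -- structural identity
  have hu2 : u * u = (2 * a) • u - (a ^ 2) • (1 : Hd) := by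
    refine TrivSqZeroExt.ext ?_ ?_
    · simp [TrivSqZeroExt.fst_mul]; ring
    · simp only [TrivSqZeroExt.snd_mul, TrivSqZeroExt.snd_sub, TrivSqZeroExt.snd_smul,
        TrivSqZeroExt.snd_one, TrivSqZeroExt.fst_smul]
      funext i
      simp [← hv, MulOpposite.smul_eq_mul_unop]
      ring
  -- R (u*u) two ways
  have hA : R (u * u) = (2 * a) • R u - (a ^ 2) • u := by
    rw [hu2, map_sub, map_smul, map_smul, ← he0, ← hu]
  have hB : R (u * u) = R (R u) + R (R u) + lam • R u := by
    rw [h1]; simp [map_add, map_smul]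
  -- Eq2
  have h2 : u * R u = R (u * u) + R (R u) + lam • R u := by
    have := hR e0 u
    simp only [he0, one_mul, mul_one] at this
    exact this
  -- components
  set b : ℝ := TrivSqZeroExt.fst (R u) with hb
  set w : Fin 3 → ℝ := TrivSqZeroExt.snd (R u) with hw
  set c : ℝ := TrivSqZeroExt.fst (R (R u)) with hc
  set z : Fin 3 → ℝ := TrivSqZeroExt.snd (R (R u)) with hz
  -- fst of h1
  have hF : a * a = b + b + lam * a := by
    have := congrArg TrivSqZeroExt.fst h1
    simpa [TrivSqZeroExt.fst_mul] using this
  have hvz : v = 0 := by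
    funext i
    have hAB : TrivSqZeroExt.snd (R (u*u)) = TrivSqZeroExt.snd (R (u*u)) := rfl
    have hA' : (2 * a) • w - (a ^ 2) • v = z + z + lam • w := by
      rw [← TrivSqZeroExt.snd_smul, ← TrivSqZeroExt.snd_smul, ← TrivSqZeroExt.snd_sub, ← hA, hB]
      simp
      rfl
    have h1' : a • v + a • v = w + w + lam • v := by
      have := congrArg TrivSqZeroExt.snd h1
      simpa [TrivSqZeroExt.snd_mul] using this
    have h2' : a • w + b • v = ((2 * a) • w - (a ^ 2) • v) + z + lam • w := by
      have := congrArg TrivSqZeroExt.snd h2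
      rw [hA] at this
      simpa [TrivSqZeroExt.snd_mul] using this
    have e1 := congrFun hA' i
    have e2 := congrFun h1' i
    have e3 := congrFun h2' i
    simp [Pi.smul_apply, smul_eq_mul] at e1 e2 e3
    have key : lam ^ 2 * v i = 0 := by
      linear_combination (-(4*a+lam)) * e2  - 2*e1 + 4*e3 + 2*(v i)*hF
    show v i = 0
    exact (mul_eq_zero.mp key).resolve_left (pow_ne_zero _ hlam)
  have hu1 : u = a • (1 : Hd) := by
    refine TrivSqZeroExt.ext ?_ ?_
    · simp; rfl
    · rw [← hv, hvz]; simp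
  have hb2 : b = a * a := by
    have hru : R u = a • u := by
      conv_lhs => rw [hu1]
      rw [map_smul, ← he0, ← hu]
    rw [hb, hru]
    simp [← ha]
  have hq : a ^ 2 + lam * a = 0 := by linear_combination -hF - 2*hb2
  refine ⟨?_, hq, hvz⟩
  rcases mul_eq_zero.mp (show a * (a + lam) = 0 by linear_combination hq) with h | h
  · left
    show u = 0
    rw [hu1, h, zero_smul]
  · right
    show u = -lam • e0
    have : a = -lam := by linarith
    rw [hu1, this, he0, neg_smul]
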